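/- Let N ≥ 1, p > 2, p′ = p/(p−1), and let a, b : ℝᴺ → ℝ be measurable with a(x) ≥ a₀ > 0 and 0 ≤ b(x) ≤ b₊ ≤ p − 1 for almost every x. Let h(x,·,·) be the Legendre transform of f(x,s,t) = (a(x)/p)(|s|^p + 2b(x)|s|^{p/2}|t|^{p/2} + |t|^p), and let h₊ be the Legendre transform of f₊(s,t) = (1/p)(|s|^p + 2b₊|s|^{p/2}|t|^{p/2} + |t|^p). Then for all ū, v̄ ∈ L^{p′}(ℝᴺ) one has ∫_{ℝᴺ} h(x, ū(x), v̄(x)) dx ≥ h₊( ‖a^{−1/p} ū‖_{p′} , ‖a^{−1/p} v̄‖_{p′} ), where ‖a^{−1/p} w‖_{p′} = ( ∫_{ℝᴺ} a(x)^{1−p′} |w(x)|^{p′} dx )^{1/p′}. -/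

import Mathlib

open MeasureTheory

private lemma sign_mul_self' (x : ℝ) : Real.sign x * x = |x| := by
  rcases lt_trichotomy x 0 with hx | hx | hx
  · rw [Real.sign_of_neg hx, abs_of_neg hx]; ring
  · simp [hx]
  · rw [Real.sign_of_pos hx, abs_of_pos hx]; ring

private lemma conj_div_eq {p q : ℝ} (hpq : p.HolderConjugate q) : q / p = q - 1 := by
  have h := hpq.mul_eq_add
  have hp0 := hpq.ne_zero
  field_simp
  nlinarith [h]

private lemma young_wt {p q c s sb : ℝ} (hpq : p.HolderConjugate q) (hc : 0 < c) :
    s * sb ≤ c / p * |s| ^ p + c ^ (1 - q) / q * |sb| ^ q := by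
  have h1 : s * sb ≤ (c ^ (1/p) * |s|) * (c ^ (-(1/p)) * |sb|) := by
    have : (c ^ (1/p) * |s|) * (c ^ (-(1/p)) * |sb|) = (c ^ (1/p) * c ^ (-(1/p))) * (|s| * |sb|) := by
      ring
    rw [this, ← Real.rpow_add hc, add_neg_cancel, Real.rpow_zero, one_mul]
    calc s * sb ≤ |s * sb| := le_abs_self _
      _ = |s| * |sb| := abs_mul _ _
  refine h1.trans ((Real.young_inequality_of_nonneg (by positivity) (by positivity) hpq).trans_eq ?_)
  have hs : (c ^ (1/p) * |s|) ^ p = c * |s| ^ p := by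
    rw [Real.mul_rpow (by positivity) (abs_nonneg _), ← Real.rpow_mul hc.le, one_div,
      inv_mul_cancel₀ hpq.ne_zero, Real.rpow_one]
  have hsb : (c ^ (-(1/p)) * |sb|) ^ q = c ^ (1 - q) * |sb| ^ q := by
    rw [Real.mul_rpow (by positivity) (abs_nonneg _), ← Real.rpow_mul hc.le]
    congr 2
    have h2 := conj_div_eq hpq
    have h3 : -(1/p) * q = -(q/p) := by ring
    rw [h3, h2]; ring
  rw [hs, hsb]; ring

/-- the element bound by Young's inequality -/
private lemma elem_bd {p q a₀ A B sb tb s t : ℝ} (hpq : p.HolderConjugate q)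
    (ha₀ : 0 < a₀) (hA : a₀ ≤ A) (hB : 0 ≤ B) :
    s * sb + t * tb - A / p * (|s| ^ p + 2 * B * |s| ^ (p/2) * |t| ^ (p/2) + |t| ^ p)
      ≤ a₀ ^ (1 - q) / q * (|sb| ^ q + |tb| ^ q) := by
  have hp0 := hpq.pos
  have y1 := young_wt (s := s) (sb := sb) hpq ha₀
  have y2 := young_wt (s := t) (sb := tb) hpq ha₀
  have hcr : 0 ≤ 2 * B * |s| ^ (p/2) * |t| ^ (p/2) := by positivity
  have hE1 : a₀ * (|s| ^ p + |t| ^ p)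
      ≤ A * (|s| ^ p + 2 * B * |s| ^ (p/2) * |t| ^ (p/2) + |t| ^ p) := by
    have h1 : a₀ * (|s| ^ p + |t| ^ p) ≤ A * (|s| ^ p + |t| ^ p) :=
      mul_le_mul_of_nonneg_right hA (by positivity)
    have h2 : 0 ≤ A * (2 * B * |s| ^ (p/2) * |t| ^ (p/2)) :=
      mul_nonneg (by linarith) hcr
    nlinarith [h1, h2]
  have h3 : a₀ * (|s| ^ p + |t| ^ p) / p
      ≤ A * (|s| ^ p + 2 * B * |s| ^ (p/2) * |t| ^ (p/2) + |t| ^ p) / p :=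
    (div_le_div_iff_of_pos_right hp0).mpr hE1
  rw [div_mul_eq_mul_div]
  have h4 : a₀ / p * (|s| ^ p + |t| ^ p) = a₀ * (|s| ^ p + |t| ^ p) / p := by ring
  linarith [y1, y2]

set_option maxHeartbeats 2000000 in
/-- with `h(x,·,·)` the Legendre transform of
`f(x,s,t) = (a(x)/p)(|s|^p + 2b(x)|s|^(p/2)|t|^(p/2) + |t|^p)` and `h₊` the Legendre transform
of `f₊(s,t) = (1/p)(|s|^p + 2b₊|s|^(p/2)|t|^(p/2) + |t|^p)`, one has for `ū, v̄ ∈ L^(p')(ℝᴺ)`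
`∫ h(x, ū(x), v̄(x)) dx ≥ h₊(‖a^(-1/p) ū‖_(p'), ‖a^(-1/p) v̄‖_(p'))`, where
`‖a^(-1/p) w‖_(p') = (∫ a(x)^(1-p') |w(x)|^(p') dx)^(1/p')`. -/
theorem stmt_19 (N : ℕ) (hN : 1 ≤ N) (p p' a₀ bp : ℝ) (hp : 2 < p) (hp' : p' = p / (p - 1))
    (ha₀ : 0 < a₀) (hbp : bp ≤ p - 1)
    (a b : (Fin N → ℝ) → ℝ) (hma : Measurable a) (hmb : Measurable b)
    (ha : ∀ᵐ x ∂(volume : Measure (Fin N → ℝ)), a₀ ≤ a x)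
    (hb : ∀ᵐ x ∂(volume : Measure (Fin N → ℝ)), 0 ≤ b x ∧ b x ≤ bp)
    (u v : (Fin N → ℝ) → ℝ) (hmu : Measurable u) (hmv : Measurable v)
    (hu : MemLp u (ENNReal.ofReal p') (volume : Measure (Fin N → ℝ)))
    (hv : MemLp v (ENNReal.ofReal p') (volume : Measure (Fin N → ℝ)))
    (h : (Fin N → ℝ) → ℝ → ℝ → ℝ)
    (hh : ∀ x sb tb, h x sb tb = ⨆ st : ℝ × ℝ,
      (st.1 * sb + st.2 * tb -
        (a x / p) * (|st.1| ^ p + 2 * b x * |st.1| ^ (p / 2) * |st.2| ^ (p / 2) + |st.2| ^ p)))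
    (hplus : ℝ → ℝ → ℝ)
    (hhplus : ∀ sb tb : ℝ, hplus sb tb = ⨆ st : ℝ × ℝ,
      (st.1 * sb + st.2 * tb -
        (1 / p) * (|st.1| ^ p + 2 * bp * |st.1| ^ (p / 2) * |st.2| ^ (p / 2) + |st.2| ^ p))) :
    hplus ((∫ x, a x ^ (1 - p') * |u x| ^ p') ^ (1 / p'))
        ((∫ x, a x ^ (1 - p') * |v x| ^ p') ^ (1 / p')) ≤
      ∫ x, h x (u x) (v x) := by
  have hp1 : 1 < p := by linarith
  have hp0 : 0 < p := by linarith
  have hpq : p.HolderConjugate p' := (Real.holderConjugate_iff_eq_conjExponent hp1).2 hp'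
  have hq1 : 1 < p' := hpq.symm.lt
  have hq0 : 0 < p' := hpq.symm.pos
  have hqp : (p' - 1) * p = p' := hpq.symm.sub_one_mul_conj
  have h1qp : (1 - p') * p = -p' := by nlinarith [hqp]
  have hbp0 : 0 ≤ bp := by
    obtain ⟨x, hx1, hx2⟩ := hb.exists
    linarith
  -- basic integrability
  have huq : Integrable (fun x => |u x| ^ p') (volume : Measure (Fin N → ℝ)) := by
    have := hu.integrable_norm_rpow (by simp [ENNReal.ofReal_eq_zero]; linarith) (by simp)
    simpa [Real.norm_eq_abs, ENNReal.toReal_ofReal hq0.le] using this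
  have hvq : Integrable (fun x => |v x| ^ p') (volume : Measure (Fin N → ℝ)) := by
    have := hv.integrable_norm_rpow (by simp [ENNReal.ofReal_eq_zero]; linarith) (by simp)
    simpa [Real.norm_eq_abs, ENNReal.toReal_ofReal hq0.le] using this
  have hca : Measurable fun x => a x ^ (1 - p') := hma.pow measurable_const
  have hcbd : ∀ᵐ x ∂(volume : Measure (Fin N → ℝ)), ‖a x ^ (1 - p')‖ ≤ a₀ ^ (1 - p') := by
    filter_upwards [ha] with x hx
    have hax : 0 < a x := lt_of_lt_of_le ha₀ hx
    rw [Real.norm_eq_abs, abs_of_nonneg (Real.rpow_nonneg hax.le _)]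
    exact Real.rpow_le_rpow_of_nonpos ha₀ hx (by linarith)
  have hIu_int : Integrable (fun x => a x ^ (1 - p') * |u x| ^ p')
      (volume : Measure (Fin N → ℝ)) :=
    huq.bdd_mul hca.aestronglyMeasurable hcbd
  have hIv_int : Integrable (fun x => a x ^ (1 - p') * |v x| ^ p')
      (volume : Measure (Fin N → ℝ)) :=
    hvq.bdd_mul hca.aestronglyMeasurable hcbd
  set Ju : ℝ := ∫ x, a x ^ (1 - p') * |u x| ^ p' with hJudef
  set Jv : ℝ := ∫ x, a x ^ (1 - p') * |v x| ^ p' with hJvdef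
  have hIu0 : ∀ᵐ x ∂(volume : Measure (Fin N → ℝ)), 0 ≤ a x ^ (1 - p') * |u x| ^ p' := by
    filter_upwards [ha] with x hx
    have hax : 0 < a x := lt_of_lt_of_le ha₀ hx
    positivity
  have hIv0 : ∀ᵐ x ∂(volume : Measure (Fin N → ℝ)), 0 ≤ a x ^ (1 - p') * |v x| ^ p' := by
    filter_upwards [ha] with x hx
    have hax : 0 < a x := lt_of_lt_of_le ha₀ hx
    positivity
  have hJu0 : 0 ≤ Ju := integral_nonneg_of_ae hIu0
  have hJv0 : 0 ≤ Jv := integral_nonneg_of_ae hIv0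
  set U : ℝ := Ju ^ (1/p') with hUdef
  set V : ℝ := Jv ^ (1/p') with hVdef
  have hU0 : 0 ≤ U := Real.rpow_nonneg hJu0 _
  have hV0 : 0 ≤ V := Real.rpow_nonneg hJv0 _
  have hUq : U ^ p' = Ju := by
    rw [hUdef, ← Real.rpow_mul hJu0, one_div, inv_mul_cancel₀ (ne_of_gt hq0), Real.rpow_one]
  have hVq : V ^ p' = Jv := by
    rw [hVdef, ← Real.rpow_mul hJv0, one_div, inv_mul_cancel₀ (ne_of_gt hq0), Real.rpow_one]
  have hUzero : U = 0 → Ju = 0 := fun h0 => by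
    rw [← hUq, h0, Real.zero_rpow (ne_of_gt hq0)]
  have hVzero : V = 0 → Jv = 0 := fun h0 => by
    rw [← hVq, h0, Real.zero_rpow (ne_of_gt hq0)]
  -- cross integrand and Cauchy-Schwarz
  have hK0 : ∀ᵐ x ∂(volume : Measure (Fin N → ℝ)),
      0 ≤ a x ^ (1 - p') * (|u x| ^ (p'/2) * |v x| ^ (p'/2)) := by
    filter_upwards [ha] with x hx
    have hax : 0 < a x := lt_of_lt_of_le ha₀ hx
    positivity
  have hKm : Measurable fun x => a x ^ (1 - p') * (|u x| ^ (p'/2) * |v x| ^ (p'/2)) :=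
    hca.mul ((hmu.abs.pow measurable_const).mul (hmv.abs.pow measurable_const))
  have hK_int : Integrable (fun x => a x ^ (1 - p') * (|u x| ^ (p'/2) * |v x| ^ (p'/2)))
      (volume : Measure (Fin N → ℝ)) := by
    refine Integrable.mono' (((huq.add hvq).const_mul (a₀ ^ (1 - p') / 2)).const_mul 1)
      hKm.aestronglyMeasurable ?_
    filter_upwards [ha] with x hx
    have hax : 0 < a x := lt_of_lt_of_le ha₀ hx
    have hc1 : a x ^ (1 - p') ≤ a₀ ^ (1 - p') :=
      Real.rpow_le_rpow_of_nonpos ha₀ hx (by linarith)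
    have hsq : |u x| ^ (p'/2) * |v x| ^ (p'/2) ≤ (|u x| ^ p' + |v x| ^ p') / 2 := by
      have e1 : (|u x| ^ (p'/2)) ^ (2:ℕ) = |u x| ^ p' := by
        rw [← Real.rpow_natCast (|u x| ^ (p'/2)) 2, ← Real.rpow_mul (abs_nonneg _)]
        norm_num
      have e2 : (|v x| ^ (p'/2)) ^ (2:ℕ) = |v x| ^ p' := by
        rw [← Real.rpow_natCast (|v x| ^ (p'/2)) 2, ← Real.rpow_mul (abs_nonneg _)]
        norm_num
      nlinarith [sq_nonneg (|u x| ^ (p'/2) - |v x| ^ (p'/2))]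
    rw [Real.norm_eq_abs, abs_of_nonneg (by positivity)]
    calc a x ^ (1 - p') * (|u x| ^ (p'/2) * |v x| ^ (p'/2))
        ≤ a₀ ^ (1 - p') * ((|u x| ^ p' + |v x| ^ p') / 2) := by
          apply mul_le_mul hc1 hsq (by positivity) (by positivity)
      _ = 1 * (a₀ ^ (1 - p') / 2 * (|u x| ^ p' + |v x| ^ p')) := by ring
  have hKCS : (∫ x, a x ^ (1 - p') * (|u x| ^ (p'/2) * |v x| ^ (p'/2)))
      ≤ Ju ^ (1/(2:ℝ)) * Jv ^ (1/(2:ℝ)) := by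
    have h22 : (2:ℝ).HolderConjugate 2 := by
      exact (Real.holderConjugate_iff_eq_conjExponent (by norm_num)).2 (by norm_num)
    have hfm : Measurable fun x => Real.sqrt (a x ^ (1 - p') * |u x| ^ p') :=
      ((hca.mul (hmu.abs.pow measurable_const))).sqrt
    have hgm : Measurable fun x => Real.sqrt (a x ^ (1 - p') * |v x| ^ p') :=
      ((hca.mul (hmv.abs.pow measurable_const))).sqrt
    have hf2 : MemLp (fun x => Real.sqrt (a x ^ (1 - p') * |u x| ^ p')) (ENNReal.ofReal 2)
        (volume : Measure (Fin N → ℝ)) := by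
      have : ENNReal.ofReal 2 = 2 := by simp [ENNReal.ofReal_ofNat]
      rw [this]
      refine (memLp_two_iff_integrable_sq hfm.aestronglyMeasurable).2 ?_
      refine hIu_int.congr ?_
      filter_upwards [hIu0] with x hx
      rw [Real.sq_sqrt hx]
    have hg2 : MemLp (fun x => Real.sqrt (a x ^ (1 - p') * |v x| ^ p')) (ENNReal.ofReal 2)
        (volume : Measure (Fin N → ℝ)) := by
      have : ENNReal.ofReal 2 = 2 := by simp [ENNReal.ofReal_ofNat]
      rw [this]
      refine (memLp_two_iff_integrable_sq hgm.aestronglyMeasurable).2 ?_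
      refine hIv_int.congr ?_
      filter_upwards [hIv0] with x hx
      rw [Real.sq_sqrt hx]
    have hCS := integral_mul_le_Lp_mul_Lq_of_nonneg h22
      (Filter.Eventually.of_forall fun x => Real.sqrt_nonneg _)
      (Filter.Eventually.of_forall fun x => Real.sqrt_nonneg _) hf2 hg2
    have hL : (∫ x, a x ^ (1 - p') * (|u x| ^ (p'/2) * |v x| ^ (p'/2)))
        = ∫ x, Real.sqrt (a x ^ (1 - p') * |u x| ^ p') *
            Real.sqrt (a x ^ (1 - p') * |v x| ^ p') := by
      refine integral_congr_ae ?_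
      filter_upwards [ha] with x hx
      have hax : 0 < a x := lt_of_lt_of_le ha₀ hx
      rw [← Real.sqrt_mul (by positivity)]
      have : a x ^ (1 - p') * |u x| ^ p' * (a x ^ (1 - p') * |v x| ^ p')
          = (a x ^ (1 - p') * (|u x| ^ (p'/2) * |v x| ^ (p'/2))) ^ (2:ℕ) := by
        have e1 : (|u x| ^ (p'/2)) ^ (2:ℕ) = |u x| ^ p' := by
          rw [← Real.rpow_natCast (|u x| ^ (p'/2)) 2, ← Real.rpow_mul (abs_nonneg _)]
          norm_num
        have e2 : (|v x| ^ (p'/2)) ^ (2:ℕ) = |v x| ^ p' := by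
          rw [← Real.rpow_natCast (|v x| ^ (p'/2)) 2, ← Real.rpow_mul (abs_nonneg _)]
          norm_num
        rw [← e1, ← e2]; ring
      rw [this, Real.sqrt_sq (by positivity)]
    have hR1 : (∫ x, Real.sqrt (a x ^ (1 - p') * |u x| ^ p') ^ (2:ℝ)) = Ju := by
      rw [hJudef]
      refine integral_congr_ae ?_
      filter_upwards [hIu0] with x hx
      rw [show (2:ℝ) = ((2:ℕ):ℝ) by norm_num, Real.rpow_natCast, Real.sq_sqrt hx]
    have hR2 : (∫ x, Real.sqrt (a x ^ (1 - p') * |v x| ^ p') ^ (2:ℝ)) = Jv := by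
      rw [hJvdef]
      refine integral_congr_ae ?_
      filter_upwards [hIv0] with x hx
      rw [show (2:ℝ) = ((2:ℕ):ℝ) by norm_num, Real.rpow_natCast, Real.sq_sqrt hx]
    rw [hL]
    calc (∫ x, Real.sqrt (a x ^ (1 - p') * |u x| ^ p') *
            Real.sqrt (a x ^ (1 - p') * |v x| ^ p'))
        ≤ (∫ x, Real.sqrt (a x ^ (1 - p') * |u x| ^ p') ^ (2:ℝ)) ^ (1/(2:ℝ)) *
          (∫ x, Real.sqrt (a x ^ (1 - p') * |v x| ^ p') ^ (2:ℝ)) ^ (1/(2:ℝ)) := hCS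
      _ = Ju ^ (1/(2:ℝ)) * Jv ^ (1/(2:ℝ)) := by rw [hR1, hR2]
  
  -- pointwise identities for the extremal test functions
  have hw_mul : ∀ (f : (Fin N → ℝ) → ℝ) (x : Fin N → ℝ),
      (a x ^ (1 - p') * (Real.sign (f x) * |f x| ^ (p' - 1))) * f x
        = a x ^ (1 - p') * |f x| ^ p' := by
    intro f x
    rcases eq_or_ne (f x) 0 with h0 | h0
    · rw [h0]
      simp [Real.zero_rpow (ne_of_gt hq0), Real.zero_rpow (by intro hc; exact (by linarith : p' ≠ 1) (by linarith) : p' - 1 ≠ 0)]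
    · have e : (a x ^ (1 - p') * (Real.sign (f x) * |f x| ^ (p' - 1))) * f x
          = a x ^ (1 - p') * (|f x| ^ (p' - 1) * (Real.sign (f x) * f x)) := by ring
      rw [e, sign_mul_self']
      congr 1
      have habs : (0:ℝ) < |f x| := abs_pos.mpr h0
      calc |f x| ^ (p' - 1) * |f x| = |f x| ^ (p' - 1) * |f x| ^ (1:ℝ) := by rw [Real.rpow_one]
        _ = |f x| ^ (p' - 1 + 1) := (Real.rpow_add habs _ _).symm
        _ = |f x| ^ p' := by norm_num
  have hw_abs : ∀ (f : (Fin N → ℝ) → ℝ) (x : Fin N → ℝ), 0 < a x →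
      |a x ^ (1 - p') * (Real.sign (f x) * |f x| ^ (p' - 1))|
        = a x ^ (1 - p') * |f x| ^ (p' - 1) := by
    intro f x hax
    rcases eq_or_ne (f x) 0 with h0 | h0
    · rw [h0]
      simp [Real.zero_rpow (by intro hc; exact (by linarith : p' ≠ 1) (by linarith) : p' - 1 ≠ 0)]
    · rw [abs_mul, abs_mul, abs_of_nonneg (Real.rpow_nonneg hax.le _),
        abs_of_nonneg (Real.rpow_nonneg (abs_nonneg _) _)]
      rcases Real.sign_apply_eq_of_ne_zero _ h0 with hs | hs <;> rw [hs] <;> norm_num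
  have hw_p : ∀ (f : (Fin N → ℝ) → ℝ) (x : Fin N → ℝ), 0 < a x →
      a x * (a x ^ (1 - p') * |f x| ^ (p' - 1)) ^ p = a x ^ (1 - p') * |f x| ^ p' := by
    intro f x hax
    rw [Real.mul_rpow (Real.rpow_nonneg hax.le _) (Real.rpow_nonneg (abs_nonneg _) _),
      ← Real.rpow_mul hax.le, ← Real.rpow_mul (abs_nonneg _), h1qp, hqp, ← mul_assoc]
    congr 1
    rw [← Real.rpow_one_add' hax.le (by intro hc; exact (by linarith : (1:ℝ) + -p' ≠ 0) hc)]
    all_goals congr 1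
    all_goals ring
  have hw_half : ∀ (x : Fin N → ℝ), 0 < a x →
      a x * ((a x ^ (1 - p') * |u x| ^ (p' - 1)) ^ (p/2) *
        (a x ^ (1 - p') * |v x| ^ (p' - 1)) ^ (p/2))
        = a x ^ (1 - p') * (|u x| ^ (p'/2) * |v x| ^ (p'/2)) := by
    intro x hax
    rw [Real.mul_rpow (Real.rpow_nonneg hax.le _) (Real.rpow_nonneg (abs_nonneg _) _),
      Real.mul_rpow (Real.rpow_nonneg hax.le _) (Real.rpow_nonneg (abs_nonneg _) _),
      ← Real.rpow_mul hax.le, ← Real.rpow_mul (abs_nonneg (u x)),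
      ← Real.rpow_mul (abs_nonneg (v x))]
    have e1 : (1 - p') * (p/2) = -(p'/2) := by
      rw [show (1 - p') * (p/2) = ((1 - p') * p)/2 by ring, h1qp]; ring
    have e2 : (p' - 1) * (p/2) = p'/2 := by
      rw [show (p' - 1) * (p/2) = ((p' - 1) * p)/2 by ring, hqp]
    rw [e1, e2]
    have e3 : a x * (a x ^ (-(p'/2)) * a x ^ (-(p'/2))) = a x ^ (1 - p') := by
      rw [← Real.rpow_add hax, show -(p'/2) + -(p'/2) = -p' by ring,
        ← Real.rpow_one_add' hax.le (by intro hc; exact (by linarith : (1:ℝ) + -p' ≠ 0) hc)]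
      all_goals congr 1
      all_goals ring
    calc a x * (a x ^ (-(p'/2)) * |u x| ^ (p'/2) * (a x ^ (-(p'/2)) * |v x| ^ (p'/2)))
        = (a x * (a x ^ (-(p'/2)) * a x ^ (-(p'/2)))) * (|u x| ^ (p'/2) * |v x| ^ (p'/2)) := by
          ring
      _ = a x ^ (1 - p') * (|u x| ^ (p'/2) * |v x| ^ (p'/2)) := by rw [e3]
  -- normalization factors
  set au : ℝ := if U = 0 then 0 else U ^ (1 - p') with haudef
  set av : ℝ := if V = 0 then 0 else V ^ (1 - p') with havdef
  have hau0 : 0 ≤ au := by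
    rw [haudef]; split_ifs
    · exact le_rfl
    · exact Real.rpow_nonneg hU0 _
  have hav0 : 0 ≤ av := by
    rw [havdef]; split_ifs
    · exact le_rfl
    · exact Real.rpow_nonneg hV0 _
  have hauJ : au * Ju = U := by
    rw [haudef]; split_ifs with h0
    · rw [hUzero h0, h0, mul_zero]
    · have hUpos : 0 < U := lt_of_le_of_ne hU0 (Ne.symm h0)
      rw [← hUq, ← Real.rpow_add hUpos]
      norm_num
  have havJ : av * Jv = V := by
    rw [havdef]; split_ifs with h0
    · rw [hVzero h0, h0, mul_zero]
    · have hVpos : 0 < V := lt_of_le_of_ne hV0 (Ne.symm h0)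
      rw [← hVq, ← Real.rpow_add hVpos]
      norm_num
  have haup : au ^ p * Ju ≤ 1 := by
    rw [haudef]; split_ifs with h0
    · rw [Real.zero_rpow (ne_of_gt hp0), zero_mul]; norm_num
    · have hUpos : 0 < U := lt_of_le_of_ne hU0 (Ne.symm h0)
      rw [← hUq, ← Real.rpow_mul hU0, h1qp, ← Real.rpow_add hUpos,
        show -p' + p' = 0 by ring, Real.rpow_zero]
  have havp : av ^ p * Jv ≤ 1 := by
    rw [havdef]; split_ifs with h0
    · rw [Real.zero_rpow (ne_of_gt hp0), zero_mul]; norm_num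
    · have hVpos : 0 < V := lt_of_le_of_ne hV0 (Ne.symm h0)
      rw [← hVq, ← Real.rpow_mul hV0, h1qp, ← Real.rpow_add hVpos,
        show -p' + p' = 0 by ring, Real.rpow_zero]
  have hauh : au ^ (p/2) * Ju ^ (1/(2:ℝ)) ≤ 1 := by
    rw [haudef]; split_ifs with h0
    · rw [Real.zero_rpow (by positivity : p/2 ≠ 0), zero_mul]; norm_num
    · have hUpos : 0 < U := lt_of_le_of_ne hU0 (Ne.symm h0)
      rw [← hUq, ← Real.rpow_mul hU0, ← Real.rpow_mul hU0, ← Real.rpow_add hUpos,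
        show (1 - p') * (p/2) + p' * (1/2) = 0 by nlinarith [h1qp], Real.rpow_zero]
  have havh : av ^ (p/2) * Jv ^ (1/(2:ℝ)) ≤ 1 := by
    rw [havdef]; split_ifs with h0
    · rw [Real.zero_rpow (by positivity : p/2 ≠ 0), zero_mul]; norm_num
    · have hVpos : 0 < V := lt_of_le_of_ne hV0 (Ne.symm h0)
      rw [← hVq, ← Real.rpow_mul hV0, ← Real.rpow_mul hV0, ← Real.rpow_add hVpos,
        show (1 - p') * (p/2) + p' * (1/2) = 0 by nlinarith [h1qp], Real.rpow_zero]
  -- bounded above families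
  have hbdd : ∀ (x : Fin N → ℝ) (sb tb : ℝ), a₀ ≤ a x → 0 ≤ b x →
      BddAbove (Set.range fun st : ℝ × ℝ =>
        st.1 * sb + st.2 * tb -
          a x / p * (|st.1| ^ p + 2 * b x * |st.1| ^ (p / 2) * |st.2| ^ (p / 2) + |st.2| ^ p)) := by
    intro x sb tb hax hbx
    refine ⟨a₀ ^ (1 - p') / p' * (|sb| ^ p' + |tb| ^ p'), ?_⟩
    rintro y ⟨st, rfl⟩
    exact elem_bd hpq ha₀ hax hbx
  have hnn : ∀ᵐ x ∂(volume : Measure (Fin N → ℝ)), 0 ≤ h x (u x) (v x) := by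
    filter_upwards [ha, hb] with x hax hbx
    rw [hh]
    refine le_trans ?_ (le_ciSup (hbdd x (u x) (v x) hax hbx.1) ((0:ℝ), (0:ℝ)))
    simp [Real.zero_rpow (ne_of_gt hp0), Real.zero_rpow (show p/2 ≠ 0 by positivity)]
  have hub : ∀ᵐ x ∂(volume : Measure (Fin N → ℝ)),
      h x (u x) (v x) ≤ a₀ ^ (1 - p') / p' * (|u x| ^ p' + |v x| ^ p') := by
    filter_upwards [ha, hb] with x hax hbx
    rw [hh]
    exact ciSup_le fun st => elem_bd hpq ha₀ hax hbx.1
  -- measurability of the supremum via rational indices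
  have hΦm : Measurable fun x => ⨆ st : ℚ × ℚ,
      ((st.1:ℝ) * u x + (st.2:ℝ) * v x -
        a x / p * (|(st.1:ℝ)| ^ p + 2 * b x * |(st.1:ℝ)| ^ (p / 2) * |(st.2:ℝ)| ^ (p / 2) +
          |(st.2:ℝ)| ^ p)) := by
    refine Measurable.iSup fun st => ?_
    refine ((hmu.const_mul _).add (hmv.const_mul _)).sub ((hma.div_const p).mul ?_)
    exact (measurable_const.add (((hmb.const_mul 2).mul_const _).mul_const _)).add
      measurable_const
  have hΦeq : ∀ᵐ x ∂(volume : Measure (Fin N → ℝ)),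
      (⨆ st : ℚ × ℚ,
        ((st.1:ℝ) * u x + (st.2:ℝ) * v x -
          a x / p * (|(st.1:ℝ)| ^ p + 2 * b x * |(st.1:ℝ)| ^ (p / 2) * |(st.2:ℝ)| ^ (p / 2) +
            |(st.2:ℝ)| ^ p))) = h x (u x) (v x) := by
    filter_upwards [ha, hb] with x hax hbx
    rw [hh]
    have hbddR := hbdd x (u x) (v x) hax hbx.1
    have hbddQ : BddAbove (Set.range fun st : ℚ × ℚ =>
        ((st.1:ℝ) * u x + (st.2:ℝ) * v x -
          a x / p * (|(st.1:ℝ)| ^ p + 2 * b x * |(st.1:ℝ)| ^ (p / 2) * |(st.2:ℝ)| ^ (p / 2) +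
            |(st.2:ℝ)| ^ p))) := by
      obtain ⟨M, hM⟩ := hbddR
      refine ⟨M, ?_⟩
      rintro y ⟨q, rfl⟩
      exact hM ⟨((q.1:ℝ), (q.2:ℝ)), rfl⟩
    apply le_antisymm
    · refine ciSup_le fun q => ?_
      exact le_ciSup hbddR ((q.1:ℝ), (q.2:ℝ))
    · refine ciSup_le fun st => ?_
      have hd : DenseRange (fun q : ℚ × ℚ => ((q.1:ℝ), (q.2:ℝ))) :=
        Rat.denseRange_cast.prodMap Rat.denseRange_cast
      obtain ⟨z, hz1, hz2⟩ := mem_closure_iff_seq_limit.1 (hd st)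
      have hcont : Continuous fun st : ℝ × ℝ =>
          st.1 * u x + st.2 * v x -
            a x / p * (|st.1| ^ p + 2 * b x * |st.1| ^ (p / 2) * |st.2| ^ (p / 2) + |st.2| ^ p) := by
        have c1 : Continuous fun st : ℝ × ℝ => |st.1| ^ p :=
          (continuous_fst.abs).rpow_const fun _ => Or.inr hp0.le
        have c2 : Continuous fun st : ℝ × ℝ => |st.2| ^ p :=
          (continuous_snd.abs).rpow_const fun _ => Or.inr hp0.le
        have c3 : Continuous fun st : ℝ × ℝ => |st.1| ^ (p/2) :=
          (continuous_fst.abs).rpow_const fun _ => Or.inr (by positivity)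
        have c4 : Continuous fun st : ℝ × ℝ => |st.2| ^ (p/2) :=
          (continuous_snd.abs).rpow_const fun _ => Or.inr (by positivity)
        exact ((continuous_fst.mul continuous_const).add
          (continuous_snd.mul continuous_const)).sub (continuous_const.mul
            ((c1.add ((continuous_const.mul c3).mul c4)).add c2))
      refine le_of_tendsto ((hcont.tendsto st).comp hz2)
        (Filter.Eventually.of_forall fun n => ?_)
      obtain ⟨qn, hqn⟩ := hz1 n
      have hle := le_ciSup hbddQ qn
      rw [Function.comp_apply, ← hqn]
      exact hle
  have hh_int : Integrable (fun x => h x (u x) (v x)) (volume : Measure (Fin N → ℝ)) := by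
    refine Integrable.mono' ((huq.add hvq).const_mul (a₀ ^ (1 - p') / p'))
      (hΦm.aestronglyMeasurable.congr hΦeq) ?_
    filter_upwards [hnn, hub] with x h1 h2
    rw [Real.norm_eq_abs, abs_of_nonneg h1]
    exact h2
  -- the b·K integrand
  have hbK_int : Integrable (fun x => b x * (a x ^ (1 - p') * (|u x| ^ (p'/2) * |v x| ^ (p'/2)))) (volume : Measure (Fin N → ℝ)) := by
    refine hK_int.bdd_mul (c := bp) hmb.aestronglyMeasurable ?_
    filter_upwards [hb] with x hbx
    rw [Real.norm_eq_abs, abs_of_nonneg hbx.1]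
    exact hbx.2
  have hIbK0 : 0 ≤ ∫ x, b x * (a x ^ (1 - p') * (|u x| ^ (p'/2) * |v x| ^ (p'/2))) := by
    refine integral_nonneg_of_ae ?_
    filter_upwards [hK0, hb] with x h1 h2
    exact mul_nonneg h2.1 h1
  have hIbK_le : (∫ x, b x * (a x ^ (1 - p') * (|u x| ^ (p'/2) * |v x| ^ (p'/2)))) ≤ bp * (Ju ^ (1/(2:ℝ)) * Jv ^ (1/(2:ℝ))) := by
    have step1 : (∫ x, b x * (a x ^ (1 - p') * (|u x| ^ (p'/2) * |v x| ^ (p'/2)))) ≤ ∫ x, bp * (a x ^ (1 - p') * (|u x| ^ (p'/2) * |v x| ^ (p'/2))) := by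
      refine integral_mono_ae hbK_int (hK_int.const_mul bp) ?_
      filter_upwards [hK0, hb] with x h1 h2
      exact mul_le_mul_of_nonneg_right h2.2 h1
    rw [integral_const_mul] at step1
    exact step1.trans (mul_le_mul_of_nonneg_left hKCS hbp0)
  -- main estimate
  rw [hhplus]
  refine ciSup_le fun st => ?_
  have hG_int : Integrable (fun x =>
      st.1 * au * (a x ^ (1 - p') * |u x| ^ p') + st.2 * av * (a x ^ (1 - p') * |v x| ^ p') -
        1/p * (|st.1| ^ p * au ^ p * (a x ^ (1 - p') * |u x| ^ p') +
          2 * (|st.1| ^ (p/2) * |st.2| ^ (p/2) * (au ^ (p/2) * av ^ (p/2))) *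
            (b x * (a x ^ (1 - p') * (|u x| ^ (p'/2) * |v x| ^ (p'/2)))) +
          |st.2| ^ p * av ^ p * (a x ^ (1 - p') * |v x| ^ p')))
      (volume : Measure (Fin N → ℝ)) := by
    refine Integrable.sub ((hIu_int.const_mul _).add (hIv_int.const_mul _)) ?_
    refine Integrable.const_mul ?_ _
    exact ((hIu_int.const_mul _).add (hbK_int.const_mul _)).add (hIv_int.const_mul _)
  have hGle : ∀ᵐ x ∂(volume : Measure (Fin N → ℝ)),
      (st.1 * au * (a x ^ (1 - p') * |u x| ^ p') + st.2 * av * (a x ^ (1 - p') * |v x| ^ p') -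
        1/p * (|st.1| ^ p * au ^ p * (a x ^ (1 - p') * |u x| ^ p') +
          2 * (|st.1| ^ (p/2) * |st.2| ^ (p/2) * (au ^ (p/2) * av ^ (p/2))) *
            (b x * (a x ^ (1 - p') * (|u x| ^ (p'/2) * |v x| ^ (p'/2)))) +
          |st.2| ^ p * av ^ p * (a x ^ (1 - p') * |v x| ^ p')))
        ≤ h x (u x) (v x) := by
    filter_upwards [ha, hb] with x hax hbx
    have haxp : 0 < a x := lt_of_lt_of_le ha₀ hax
    set Wu : ℝ := a x ^ (1 - p') * (Real.sign (u x) * |u x| ^ (p' - 1)) with hWud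
    set Wv : ℝ := a x ^ (1 - p') * (Real.sign (v x) * |v x| ^ (p' - 1)) with hWvd
    have habsS : |st.1 * au * Wu| ^ p
        = |st.1| ^ p * au ^ p * (a x ^ (1 - p') * |u x| ^ (p' - 1)) ^ p := by
      rw [abs_mul, abs_mul, abs_of_nonneg hau0, hWud, hw_abs u x haxp,
        Real.mul_rpow (mul_nonneg (abs_nonneg _) hau0) (by positivity),
        Real.mul_rpow (abs_nonneg _) hau0]
    have habsT : |st.2 * av * Wv| ^ p
        = |st.2| ^ p * av ^ p * (a x ^ (1 - p') * |v x| ^ (p' - 1)) ^ p := by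
      rw [abs_mul, abs_mul, abs_of_nonneg hav0, hWvd, hw_abs v x haxp,
        Real.mul_rpow (mul_nonneg (abs_nonneg _) hav0) (by positivity),
        Real.mul_rpow (abs_nonneg _) hav0]
    have habsS2 : |st.1 * au * Wu| ^ (p/2)
        = |st.1| ^ (p/2) * au ^ (p/2) * (a x ^ (1 - p') * |u x| ^ (p' - 1)) ^ (p/2) := by
      rw [abs_mul, abs_mul, abs_of_nonneg hau0, hWud, hw_abs u x haxp,
        Real.mul_rpow (mul_nonneg (abs_nonneg _) hau0) (by positivity),
        Real.mul_rpow (abs_nonneg _) hau0]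
    have habsT2 : |st.2 * av * Wv| ^ (p/2)
        = |st.2| ^ (p/2) * av ^ (p/2) * (a x ^ (1 - p') * |v x| ^ (p' - 1)) ^ (p/2) := by
      rw [abs_mul, abs_mul, abs_of_nonneg hav0, hWvd, hw_abs v x haxp,
        Real.mul_rpow (mul_nonneg (abs_nonneg _) hav0) (by positivity),
        Real.mul_rpow (abs_nonneg _) hav0]
    have heq : (st.1 * au * Wu) * u x + (st.2 * av * Wv) * v x -
        a x / p * (|st.1 * au * Wu| ^ p +
          2 * b x * |st.1 * au * Wu| ^ (p/2) * |st.2 * av * Wv| ^ (p/2) +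
          |st.2 * av * Wv| ^ p)
        = st.1 * au * (a x ^ (1 - p') * |u x| ^ p') +
            st.2 * av * (a x ^ (1 - p') * |v x| ^ p') -
          1/p * (|st.1| ^ p * au ^ p * (a x ^ (1 - p') * |u x| ^ p') +
            2 * (|st.1| ^ (p/2) * |st.2| ^ (p/2) * (au ^ (p/2) * av ^ (p/2))) *
              (b x * (a x ^ (1 - p') * (|u x| ^ (p'/2) * |v x| ^ (p'/2)))) +
            |st.2| ^ p * av ^ p * (a x ^ (1 - p') * |v x| ^ p')) := by
      rw [habsS, habsT, habsS2, habsT2]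
      calc (st.1 * au * Wu) * u x + (st.2 * av * Wv) * v x -
          a x / p * (|st.1| ^ p * au ^ p * (a x ^ (1 - p') * |u x| ^ (p' - 1)) ^ p +
            2 * b x * (|st.1| ^ (p/2) * au ^ (p/2) * (a x ^ (1 - p') * |u x| ^ (p' - 1)) ^ (p/2)) *
              (|st.2| ^ (p/2) * av ^ (p/2) * (a x ^ (1 - p') * |v x| ^ (p' - 1)) ^ (p/2)) +
            |st.2| ^ p * av ^ p * (a x ^ (1 - p') * |v x| ^ (p' - 1)) ^ p)
          = st.1 * au * (Wu * u x) + st.2 * av * (Wv * v x) -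
            1/p * (|st.1| ^ p * au ^ p *
                (a x * (a x ^ (1 - p') * |u x| ^ (p' - 1)) ^ p) +
              2 * (|st.1| ^ (p/2) * |st.2| ^ (p/2) * (au ^ (p/2) * av ^ (p/2))) *
                (b x * (a x * ((a x ^ (1 - p') * |u x| ^ (p' - 1)) ^ (p/2) *
                  (a x ^ (1 - p') * |v x| ^ (p' - 1)) ^ (p/2)))) +
              |st.2| ^ p * av ^ p * (a x * (a x ^ (1 - p') * |v x| ^ (p' - 1)) ^ p)) := by
            ring
        _ = _ := by
            rw [hWud, hWvd, hw_mul u x, hw_mul v x, hw_p u x haxp, hw_p v x haxp,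
              hw_half x haxp]
    rw [hh, ← heq]
    exact le_ciSup (hbdd x (u x) (v x) hax hbx.1) (st.1 * au * Wu, st.2 * av * Wv)
  have hGval : (∫ x,
      (st.1 * au * (a x ^ (1 - p') * |u x| ^ p') + st.2 * av * (a x ^ (1 - p') * |v x| ^ p') -
        1/p * (|st.1| ^ p * au ^ p * (a x ^ (1 - p') * |u x| ^ p') +
          2 * (|st.1| ^ (p/2) * |st.2| ^ (p/2) * (au ^ (p/2) * av ^ (p/2))) *
            (b x * (a x ^ (1 - p') * (|u x| ^ (p'/2) * |v x| ^ (p'/2)))) +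
          |st.2| ^ p * av ^ p * (a x ^ (1 - p') * |v x| ^ p'))))
      = st.1 * au * Ju + st.2 * av * Jv -
        1/p * (|st.1| ^ p * au ^ p * Ju +
          2 * (|st.1| ^ (p/2) * |st.2| ^ (p/2) * (au ^ (p/2) * av ^ (p/2))) *
            (∫ x, b x * (a x ^ (1 - p') * (|u x| ^ (p'/2) * |v x| ^ (p'/2)))) +
          |st.2| ^ p * av ^ p * Jv) := by
    have int1 : Integrable (fun x => st.1 * au * (a x ^ (1 - p') * |u x| ^ p') +
        st.2 * av * (a x ^ (1 - p') * |v x| ^ p')) (volume : Measure (Fin N → ℝ)) :=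
      (hIu_int.const_mul _).add (hIv_int.const_mul _)
    have int2a : Integrable (fun x => |st.1| ^ p * au ^ p * (a x ^ (1 - p') * |u x| ^ p') +
        2 * (|st.1| ^ (p/2) * |st.2| ^ (p/2) * (au ^ (p/2) * av ^ (p/2))) *
          (b x * (a x ^ (1 - p') * (|u x| ^ (p'/2) * |v x| ^ (p'/2))))) (volume : Measure (Fin N → ℝ)) :=
      (hIu_int.const_mul _).add (hbK_int.const_mul _)
    have int2b : Integrable (fun x => (|st.1| ^ p * au ^ p * (a x ^ (1 - p') * |u x| ^ p') +
        2 * (|st.1| ^ (p/2) * |st.2| ^ (p/2) * (au ^ (p/2) * av ^ (p/2))) *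
          (b x * (a x ^ (1 - p') * (|u x| ^ (p'/2) * |v x| ^ (p'/2))))) +
        |st.2| ^ p * av ^ p * (a x ^ (1 - p') * |v x| ^ p')) (volume : Measure (Fin N → ℝ)) :=
      int2a.add (hIv_int.const_mul _)
    have int2 : Integrable (fun x => 1/p *
        ((|st.1| ^ p * au ^ p * (a x ^ (1 - p') * |u x| ^ p') +
          2 * (|st.1| ^ (p/2) * |st.2| ^ (p/2) * (au ^ (p/2) * av ^ (p/2))) *
            (b x * (a x ^ (1 - p') * (|u x| ^ (p'/2) * |v x| ^ (p'/2))))) +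
          |st.2| ^ p * av ^ p * (a x ^ (1 - p') * |v x| ^ p'))) (volume : Measure (Fin N → ℝ)) :=
      int2b.const_mul _
    rw [integral_sub int1 int2,
      integral_add (hIu_int.const_mul _) (hIv_int.const_mul _),
      integral_const_mul, integral_const_mul, integral_const_mul,
      integral_add int2a (hIv_int.const_mul _),
      integral_add (hIu_int.const_mul _) (hbK_int.const_mul _),
      integral_const_mul, integral_const_mul, integral_const_mul]
  refine le_trans ?_ (integral_mono_ae hG_int hh_int hGle)
  rw [hGval]
  have e1 : st.1 * au * Ju = st.1 * U := by rw [mul_assoc, hauJ]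
  have e2 : st.2 * av * Jv = st.2 * V := by rw [mul_assoc, havJ]
  have b1 : |st.1| ^ p * au ^ p * Ju ≤ |st.1| ^ p := by
    calc |st.1| ^ p * au ^ p * Ju = |st.1| ^ p * (au ^ p * Ju) := by ring
      _ ≤ |st.1| ^ p * 1 := mul_le_mul_of_nonneg_left haup (by positivity)
      _ = |st.1| ^ p := mul_one _
  have b3 : |st.2| ^ p * av ^ p * Jv ≤ |st.2| ^ p := by
    calc |st.2| ^ p * av ^ p * Jv = |st.2| ^ p * (av ^ p * Jv) := by ring
      _ ≤ |st.2| ^ p * 1 := mul_le_mul_of_nonneg_left havp (by positivity)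
      _ = |st.2| ^ p := mul_one _
  have hC0 : 0 ≤ 2 * (|st.1| ^ (p/2) * |st.2| ^ (p/2) * (au ^ (p/2) * av ^ (p/2))) := by
    have := Real.rpow_nonneg hau0 (p/2)
    have := Real.rpow_nonneg hav0 (p/2)
    positivity
  have b2 : 2 * (|st.1| ^ (p/2) * |st.2| ^ (p/2) * (au ^ (p/2) * av ^ (p/2))) *
      (∫ x, b x * (a x ^ (1 - p') * (|u x| ^ (p'/2) * |v x| ^ (p'/2))))
      ≤ 2 * bp * |st.1| ^ (p/2) * |st.2| ^ (p/2) := by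
    calc 2 * (|st.1| ^ (p/2) * |st.2| ^ (p/2) * (au ^ (p/2) * av ^ (p/2))) *
        (∫ x, b x * (a x ^ (1 - p') * (|u x| ^ (p'/2) * |v x| ^ (p'/2))))
        ≤ 2 * (|st.1| ^ (p/2) * |st.2| ^ (p/2) * (au ^ (p/2) * av ^ (p/2))) *
          (bp * (Ju ^ (1/(2:ℝ)) * Jv ^ (1/(2:ℝ)))) := mul_le_mul_of_nonneg_left hIbK_le hC0
      _ = (2 * bp * |st.1| ^ (p/2) * |st.2| ^ (p/2)) *
          ((au ^ (p/2) * Ju ^ (1/(2:ℝ))) * (av ^ (p/2) * Jv ^ (1/(2:ℝ)))) := by ring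
      _ ≤ (2 * bp * |st.1| ^ (p/2) * |st.2| ^ (p/2)) * 1 := by
          refine mul_le_mul_of_nonneg_left ?_ (by positivity)
          refine mul_le_one₀ hauh ?_ havh
          exact mul_nonneg (Real.rpow_nonneg hav0 _) (Real.rpow_nonneg hJv0 _)
      _ = 2 * bp * |st.1| ^ (p/2) * |st.2| ^ (p/2) := mul_one _
  have hsum : |st.1| ^ p * au ^ p * Ju +
      2 * (|st.1| ^ (p/2) * |st.2| ^ (p/2) * (au ^ (p/2) * av ^ (p/2))) *
        (∫ x, b x * (a x ^ (1 - p') * (|u x| ^ (p'/2) * |v x| ^ (p'/2)))) +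
      |st.2| ^ p * av ^ p * Jv
      ≤ |st.1| ^ p + 2 * bp * |st.1| ^ (p/2) * |st.2| ^ (p/2) + |st.2| ^ p := by
    linarith [b1, b2, b3]
  have hmul := mul_le_mul_of_nonneg_left hsum (by positivity : (0:ℝ) ≤ 1/p)
  linarith [hmul, e1, e2]
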